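/- Let p be a prime and let r, ℓ be positive integers with r ≤ ℓ. If a maximal zero column t_0 of the mod-p Pascal triangle with respect to ℓ exists, then the set R_0 of all zero columns with resolvable spoilers equals {t ∈ ℕ : t < r and C(ℓ', t) ≡ 0 (mod p) for every ℓ' with t_0 + 1 ≤ ℓ' ≤ ℓ}. If no zero column exists, then R_0 = ∅. -/

import Mathlib

/-- `t0` is a zero column of the mod-`p` Pascal triangle with respect to `ℓ`:
`C(ν, t0) ≡ 0 (mod p)` for all `ν = t0+1, …, ℓ`. -/
def ZeroColumn (p ℓ t0 : ℕ) : Prop :=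
  ∀ ν : ℕ, t0 < ν → ν ≤ ℓ → p ∣ Nat.choose ν t0

/-- `ν` is a zero column with resolvable spoilers of the mod-`p` Pascal triangle with
respect to `r` and `ℓ`: `ν < r` and every spoiler `t` of `ν` (i.e. `ν < t ≤ ℓ` with
`C(t,ν) ≢ 0 (mod p)`) is itself a zero column with resolvable spoilers.  A zero column
(with `t0 < r`) has no spoilers and is the base case of the recursion; if no zero column
exists, no column satisfies this predicate. -/
def ZCRS (p r ℓ : ℕ) (ν : ℕ) : Prop :=
  ν < r ∧ ∀ t, ν < t → t ≤ ℓ → ¬ (p ∣ Nat.choose t ν) → ZCRS p r ℓ t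
termination_by ℓ - ν
decreasing_by omega

private lemma zcrs_le_t0 {p r ℓ t0 : ℕ} (hrℓ : r ≤ ℓ)
    (hmax : ∀ t : ℕ, t < r → ZeroColumn p ℓ t → t ≤ t0) :
    ∀ k ν, ℓ - ν ≤ k → ZCRS p r ℓ ν → ν ≤ t0 := by
  intro k
  induction k with
  | zero =>
      intro ν hk hz
      rw [ZCRS] at hz
      -- ν ≥ ℓ, but ν < r ≤ ℓ: contradiction
      omega
  | succ k ih =>
      intro ν hk hz
      rw [ZCRS] at hz
      obtain ⟨hνr, hsp⟩ := hz
      by_cases hs : ∃ t, ν < t ∧ t ≤ ℓ ∧ ¬ (p ∣ Nat.choose t ν)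
      · obtain ⟨t, ht1, ht2, ht3⟩ := hs
        have := ih t (by omega) (hsp t ht1 ht2 ht3)
        omega
      · push_neg at hs
        have hzc : ZeroColumn p ℓ ν := by
          intro ν' h1 h2
          by_contra h
          exact h (hs ν' h1 h2)
        exact hmax ν hνr hzc

private lemma rhs_to_zcrs {p r ℓ t0 : ℕ} (hp : p.Prime) (ht0r : t0 < r) (hrℓ : r ≤ ℓ) :
    ∀ k ν, ℓ - ν ≤ k →
      (ν < r ∧ ∀ ℓ' : ℕ, t0 + 1 ≤ ℓ' → ℓ' ≤ ℓ → p ∣ Nat.choose ℓ' ν) →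
      ZCRS p r ℓ ν := by
  intro k
  induction k with
  | zero =>
      intro ν hk h
      omega
  | succ k ih =>
      intro ν hk ⟨hνr, hdvd⟩
      rw [ZCRS]
      refine ⟨hνr, fun t ht1 ht2 ht3 => ?_⟩
      -- t is a spoiler; then t ≤ t0
      have htt0 : t ≤ t0 := by
        by_contra h
        exact ht3 (hdvd t (by omega) ht2)
      refine ih t (by omega) ⟨by omega, fun ℓ' h1 h2 => ?_⟩
      have key : Nat.choose ℓ' t * Nat.choose t ν =
          Nat.choose ℓ' ν * Nat.choose (ℓ' - ν) (t - ν) :=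
        Nat.choose_mul (by omega)
      have hpd : p ∣ Nat.choose ℓ' t * Nat.choose t ν := by
        rw [key]
        exact Dvd.dvd.mul_right (hdvd ℓ' h1 h2) _
      rcases (Nat.Prime.dvd_mul hp).1 hpd with h | h
      · exact h
      · exact absurd h ht3

theorem zero_columns_with_resolvable_spoilers {p r ℓ : ℕ} (hp : p.Prime)
    (hr : 0 < r) (hrℓ : r ≤ ℓ) :
    (∀ t0 : ℕ, t0 < r → ZeroColumn p ℓ t0 →
      (∀ t : ℕ, t < r → ZeroColumn p ℓ t → t ≤ t0) →
      ∀ ν : ℕ, ZCRS p r ℓ ν ↔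
        (ν < r ∧ ∀ ℓ' : ℕ, t0 + 1 ≤ ℓ' → ℓ' ≤ ℓ → p ∣ Nat.choose ℓ' ν)) ∧
    ((¬ ∃ t : ℕ, t < r ∧ ZeroColumn p ℓ t) → ∀ ν : ℕ, ¬ ZCRS p r ℓ ν) := by
  constructor
  · intro t0 ht0r ht0z hmax ν
    constructor
    · intro hz
      have hνr : ν < r := by rw [ZCRS] at hz; exact hz.1
      refine ⟨hνr, fun ℓ' h1 h2 => ?_⟩
      by_contra h
      have hνt0 : ν ≤ t0 := zcrs_le_t0 hrℓ hmax (ℓ - ν) ν le_rfl hz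
      have hsp := (by rw [ZCRS] at hz; exact hz.2 : ∀ t, ν < t → t ≤ ℓ →
        ¬ (p ∣ Nat.choose t ν) → ZCRS p r ℓ t)
      have hzℓ' : ZCRS p r ℓ ℓ' := hsp ℓ' (by omega) h2 h
      have := zcrs_le_t0 hrℓ hmax (ℓ - ℓ') ℓ' le_rfl hzℓ'
      omega
    · exact rhs_to_zcrs hp ht0r hrℓ (ℓ - ν) ν le_rfl
  · intro hne ν
    -- strong induction via explicit bound
    suffices h : ∀ k ν, ℓ - ν ≤ k → ¬ ZCRS p r ℓ ν from h (ℓ - ν) ν le_rfl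
    intro k
    induction k with
    | zero =>
        intro ν hk hz
        rw [ZCRS] at hz
        omega
    | succ k ih =>
        intro ν hk hz
        rw [ZCRS] at hz
        obtain ⟨hνr, hsp⟩ := hz
        by_cases hs : ∃ t, ν < t ∧ t ≤ ℓ ∧ ¬ (p ∣ Nat.choose t ν)
        · obtain ⟨t, ht1, ht2, ht3⟩ := hs
          exact ih t (by omega) (hsp t ht1 ht2 ht3)
        · push_neg at hs
          exact hne ⟨ν, hνr, fun ν' h1 h2 => by
            by_contra h
            exact h (hs ν' h1 h2)⟩
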